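/- Let (V, g) be an inner product space of dimension n = m+1 with 2 ≤ n ≤ 5, and let R be an algebraic curvature tensor on V with scalar curvature S = 0 and ‖R‖² = ‖Ric‖², where Ric is the Ricci contraction of R. Then R = 0. -/
import Mathlib

open Finset

private def ric {n : ℕ} (R : Fin n → Fin n → Fin n → Fin n → ℝ) (i j : Fin n) : ℝ :=
  ∑ k, R i k j k

private def del {n : ℕ} (i j : Fin n) : ℝ := if i = j then 1 else 0

private def kn {n : ℕ} (R : Fin n → Fin n → Fin n → Fin n → ℝ) (i j k l : Fin n) : ℝ :=
  ric R i k * del j l - ric R i l * del j k + ric R j l * del i k - ric R j k * del i l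

private lemma key {n : ℕ} (R X : Fin n → Fin n → Fin n → Fin n → ℝ)
    (h1 : ∀ i j k l, X i j k l = - X j i k l)
    (h2 : ∀ i j k l, X i j k l = - X i j l k) :
    ∑ i, ∑ j, ∑ k, ∑ l, X i j k l * kn R i j k l
      = 4 * ∑ i, ∑ k, (∑ j, X i j k j) * ric R i k := by
  have hm : ∀ i k : Fin n, (∑ j, X i j k j) * ric R i k = ∑ j, X i j k j * ric R i k := by
    intro i k; rw [Finset.sum_mul]
  have split : ∑ i, ∑ j, ∑ k, ∑ l, X i j k l * kn R i j k l
      = (∑ i, ∑ j, ∑ k, ∑ l, X i j k l * (ric R i k * del j l))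
      - (∑ i, ∑ j, ∑ k, ∑ l, X i j k l * (ric R i l * del j k))
      + (∑ i, ∑ j, ∑ k, ∑ l, X i j k l * (ric R j l * del i k))
      - (∑ i, ∑ j, ∑ k, ∑ l, X i j k l * (ric R j k * del i l)) := by
    simp only [kn, mul_sub, mul_add, Finset.sum_add_distrib, Finset.sum_sub_distrib]
  have G1 : ∑ i, ∑ j, ∑ k, ∑ l, X i j k l * (ric R i k * del j l)
      = ∑ i, ∑ k, (∑ j, X i j k j) * ric R i k := by
    refine Finset.sum_congr rfl fun i _ => ?_
    rw [Finset.sum_comm]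
    refine Finset.sum_congr rfl fun k _ => ?_
    rw [Finset.sum_mul]
    refine Finset.sum_congr rfl fun j _ => ?_
    simp [del, mul_ite]
  have G2 : ∑ i, ∑ j, ∑ k, ∑ l, X i j k l * (ric R i l * del j k)
      = - ∑ i, ∑ k, (∑ j, X i j k j) * ric R i k := by
    have col : ∀ i j, ∑ k, ∑ l, X i j k l * (ric R i l * del j k)
        = ∑ l, X i j j l * ric R i l := by
      intro i j
      rw [Finset.sum_comm]
      refine Finset.sum_congr rfl fun l _ => ?_
      simp [del, mul_ite]
    simp only [col, hm]
    simp only [← Finset.sum_neg_distrib]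
    refine Finset.sum_congr rfl fun i _ => ?_
    conv_lhs => rw [Finset.sum_comm]
    refine Finset.sum_congr rfl fun l _ => ?_
    refine Finset.sum_congr rfl fun j _ => ?_
    rw [h2 i j j l]; ring
  have G3 : ∑ i, ∑ j, ∑ k, ∑ l, X i j k l * (ric R j l * del i k)
      = ∑ i, ∑ k, (∑ j, X i j k j) * ric R i k := by
    have col : ∀ i j, ∑ k, ∑ l, X i j k l * (ric R j l * del i k)
        = ∑ l, X i j i l * ric R j l := by
      intro i j
      rw [Finset.sum_comm]
      refine Finset.sum_congr rfl fun l _ => ?_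
      simp [del, mul_ite]
    simp only [col, hm]
    conv_lhs => rw [Finset.sum_comm]
    refine Finset.sum_congr rfl fun j _ => ?_
    conv_lhs => rw [Finset.sum_comm]
    refine Finset.sum_congr rfl fun l _ => ?_
    refine Finset.sum_congr rfl fun i _ => ?_
    rw [h1 i j i l, h2 j i i l]; ring
  have G4 : ∑ i, ∑ j, ∑ k, ∑ l, X i j k l * (ric R j k * del i l)
      = - ∑ i, ∑ k, (∑ j, X i j k j) * ric R i k := by
    have col : ∀ i j k, ∑ l, X i j k l * (ric R j k * del i l)
        = X i j k i * ric R j k := by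
      intro i j k
      simp [del, mul_ite]
    simp only [col, hm]
    simp only [← Finset.sum_neg_distrib]
    conv_lhs => rw [Finset.sum_comm]
    refine Finset.sum_congr rfl fun j _ => ?_
    conv_lhs => rw [Finset.sum_comm]
    refine Finset.sum_congr rfl fun k _ => ?_
    refine Finset.sum_congr rfl fun i _ => ?_
    rw [h1 i j k i]; ring
  rw [split, G1, G2, G3, G4]
  ring

private lemma kn_anti1 {n : ℕ} (R : Fin n → Fin n → Fin n → Fin n → ℝ) :
    ∀ i j k l, kn R i j k l = - kn R j i k l := by
  intro i j k l; simp only [kn]; ring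

private lemma kn_anti2 {n : ℕ} (R : Fin n → Fin n → Fin n → Fin n → ℝ) :
    ∀ i j k l, kn R i j k l = - kn R i j l k := by
  intro i j k l; simp only [kn]; ring

private lemma ric_kn {n : ℕ} (R : Fin n → Fin n → Fin n → Fin n → ℝ) (i k : Fin n) :
    ∑ j, kn R i j k j = ((n : ℝ) - 2) * ric R i k + (∑ j, ric R j j) * del i k := by
  simp only [kn]
  rw [Finset.sum_sub_distrib, Finset.sum_add_distrib, Finset.sum_sub_distrib]
  have e1 : ∑ j : Fin n, ric R i k * del j j = (n : ℝ) * ric R i k := by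
    simp [del, Finset.sum_const, Finset.card_univ, nsmul_eq_mul]
  have e2 : ∑ j : Fin n, ric R i j * del j k = ric R i k := by
    simp [del, mul_ite]
  have e3 : ∑ j : Fin n, ric R j j * del i k = (∑ j, ric R j j) * del i k := by
    rw [Finset.sum_mul]
  have e4 : ∑ j : Fin n, ric R j k * del i j = ric R i k := by
    simp [del, mul_ite]
  rw [e1, e2, e3, e4]; ring

set_option maxHeartbeats 1000000 in
private lemma sum_sq4_zero {n : ℕ} (f : Fin n → Fin n → Fin n → Fin n → ℝ)
    (h : ∑ i, ∑ j, ∑ k, ∑ l, (f i j k l) ^ 2 = 0) : ∀ i j k l, f i j k l = 0 := by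
  intro i j k l
  have h1 := (Finset.sum_eq_zero_iff_of_nonneg (fun i _ => Finset.sum_nonneg fun j _ =>
    Finset.sum_nonneg fun k _ => Finset.sum_nonneg fun l _ => sq_nonneg _)).mp h i (Finset.mem_univ i)
  have h2 := (Finset.sum_eq_zero_iff_of_nonneg (fun j _ => Finset.sum_nonneg fun k _ =>
    Finset.sum_nonneg fun l _ => sq_nonneg _)).mp h1 j (Finset.mem_univ j)
  have h3 := (Finset.sum_eq_zero_iff_of_nonneg (fun k _ =>
    Finset.sum_nonneg fun l _ => sq_nonneg _)).mp h2 k (Finset.mem_univ k)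
  have h4 := (Finset.sum_eq_zero_iff_of_nonneg (fun l _ => sq_nonneg _)).mp h3 l (Finset.mem_univ l)
  exact pow_eq_zero_iff two_ne_zero |>.mp h4

set_option maxHeartbeats 2000000 in
theorem stmt_9 {n : ℕ} (hn1 : 2 ≤ n) (hn2 : n ≤ 5)
    (R : Fin n → Fin n → Fin n → Fin n → ℝ)
    (hanti1 : ∀ i j k l, R i j k l = - R j i k l)
    (hanti2 : ∀ i j k l, R i j k l = - R i j l k)
    (hpair : ∀ i j k l, R i j k l = R k l i j)
    (hbianchi : ∀ i j k l, R i j k l + R j k i l + R k i j l = 0)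
    (hS : ∑ i, ∑ k, R i k i k = 0)
    (hnorm : ∑ i, ∑ j, ∑ k, ∑ l, (R i j k l) ^ 2
      = ∑ i, ∑ j, (∑ k, R i k j k) ^ 2) :
    ∀ i j k l, R i j k l = 0 := by
  -- P = ‖Ric‖²
  have hP : (∑ i, ∑ j, (∑ k, R i k j k) ^ 2) = ∑ i, ∑ k, ric R i k * ric R i k := by
    refine Finset.sum_congr rfl fun i _ => Finset.sum_congr rfl fun j _ => ?_
    simp only [ric, pow_two]
  -- scalar curvature vanishes
  have hS' : (∑ j, ric R j j) = 0 := hS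
  -- cross term
  have hRT : ∑ i, ∑ j, ∑ k, ∑ l, R i j k l * kn R i j k l
      = 4 * ∑ i, ∑ k, ric R i k * ric R i k := by
    exact key R R hanti1 hanti2
  -- ‖kn‖²
  have hTT : ∑ i, ∑ j, ∑ k, ∑ l, kn R i j k l * kn R i j k l
      = 4 * ((n : ℝ) - 2) * ∑ i, ∑ k, ric R i k * ric R i k := by
    rw [key R (kn R) (kn_anti1 R) (kn_anti2 R)]
    have : ∀ i k : Fin n, (∑ j, kn R i j k j) * ric R i k
        = ((n : ℝ) - 2) * (ric R i k * ric R i k) + (∑ j, ric R j j) * (del i k * ric R i k) := by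
      intro i k; rw [ric_kn]; ring
    simp only [this, hS', zero_mul, add_zero]
    simp only [Finset.mul_sum]
    exact Finset.sum_congr rfl fun i _ => Finset.sum_congr rfl fun k _ => by ring
  -- expansion of ∑ (3R - kn R)²
  have hexp : ∑ i, ∑ j, ∑ k, ∑ l, (3 * R i j k l - kn R i j k l) ^ 2
      = 9 * (∑ i, ∑ j, ∑ k, ∑ l, (R i j k l) ^ 2) - 6 * (∑ i, ∑ j, ∑ k, ∑ l, R i j k l * kn R i j k l)
        + ∑ i, ∑ j, ∑ k, ∑ l, kn R i j k l * kn R i j k l := by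
    have pt : ∀ i j k l : Fin n, (3 * R i j k l - kn R i j k l) ^ 2
        = 9 * (R i j k l) ^ 2 - 6 * (R i j k l * kn R i j k l)
          + kn R i j k l * kn R i j k l := by
      intro i j k l; ring
    simp only [pt, Finset.sum_add_distrib, Finset.sum_sub_distrib, ← Finset.mul_sum]
  have hW : (0:ℝ) ≤ ∑ i, ∑ j, ∑ k, ∑ l, (3 * R i j k l - kn R i j k l) ^ 2 :=
    Finset.sum_nonneg fun i _ => Finset.sum_nonneg fun j _ => Finset.sum_nonneg fun k _ =>
      Finset.sum_nonneg fun l _ => sq_nonneg _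
  have hQP : (∑ i, ∑ j, ∑ k, ∑ l, (R i j k l) ^ 2) = ∑ i, ∑ k, ric R i k * ric R i k := by
    rw [hnorm, hP]
  have hval : ∑ i, ∑ j, ∑ k, ∑ l, (3 * R i j k l - kn R i j k l) ^ 2
      = (4 * (n : ℝ) - 23) * (∑ i, ∑ j, ∑ k, ∑ l, (R i j k l) ^ 2) := by
    rw [hexp, hRT, hTT, ← hQP]
    ring
  have hQnonneg : 0 ≤ ∑ i, ∑ j, ∑ k, ∑ l, (R i j k l) ^ 2 :=
    Finset.sum_nonneg fun i _ => Finset.sum_nonneg fun j _ => Finset.sum_nonneg fun k _ =>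
      Finset.sum_nonneg fun l _ => sq_nonneg _
  have hn5 : (n : ℝ) ≤ 5 := by exact_mod_cast hn2
  rw [hval] at hW
  have hQ0 : ∑ i, ∑ j, ∑ k, ∑ l, (R i j k l) ^ 2 = 0 := by nlinarith [hW, hQnonneg, hn5]
  exact sum_sq4_zero R hQ0
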